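/- Monotonicity of the total broken-line weight: let S be a rectangular domain. If ζ° ≤ ζ̃° (entrywise on the boundary edges) and ξ ≤ ξ̃ (pointwise on S), then H_S(ζ°,ξ) ≤ H_S(ζ̃°,ξ̃). -/

import Mathlib

/-! Common definitions for the broken line process on the even sublattice
`Z̃² = {(t,x) ∈ ℤ² : t + x even}`. A point is a pair `(t, x)`. -/

/-- A point `(t, x)` of `ℤ²`. -/
abbrev BLPt := ℤ × ℤ

/-- An edge between diagonal nearest neighbors, encoded by its endpoint of smaller
`x`-coordinate together with a direction: `(y, true)` is the edge from `y = (t,x)` to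
`(t+1, x+1)`, and `(y, false)` is the edge from `y` to `(t−1, x+1)`. -/
abbrev BLEdge := BLPt × Bool

namespace BL

/-- The endpoint of an edge with smaller `x`-coordinate. -/
def fstPt (e : BLEdge) : BLPt := e.1

/-- The endpoint of an edge with larger `x`-coordinate. -/
def sndPt (e : BLEdge) : BLPt := (e.1.1 + (if e.2 then 1 else -1), e.1.2 + 1)

/-- The edge `e_y^NE` from `y = (t,x)` to `(t+1, x+1)`. -/
def eNE (y : BLPt) : BLEdge := (y, true)

/-- The edge `e_y^NW` from `y = (t,x)` to `(t−1, x+1)`. -/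
def eNW (y : BLPt) : BLEdge := (y, false)

/-- The edge `e_y^SE` from `y = (t,x)` to `(t+1, x−1)`. -/
def eSE (y : BLPt) : BLEdge := ((y.1 + 1, y.2 - 1), false)

/-- The edge `e_y^SW` from `y = (t,x)` to `(t−1, x−1)`. -/
def eSW (y : BLPt) : BLEdge := ((y.1 - 1, y.2 - 1), true)

/-- A rectangular domain: a nonempty set of the form
`{(t,x) ∈ Z̃² : a ≤ x + t ≤ b, c ≤ x − t ≤ d}`. -/
def IsRectDomain (S : Set BLPt) : Prop :=
  S.Nonempty ∧ ∃ a b c d : ℤ,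
    S = {y | (y.1 + y.2) % 2 = 0 ∧
      a ≤ y.2 + y.1 ∧ y.2 + y.1 ≤ b ∧ c ≤ y.2 - y.1 ∧ y.2 - y.1 ≤ d}

/-- `S̄`: the union of `S` with all points at Euclidean distance `√2` from a point
of `S` (i.e. diagonal nearest neighbors of points of `S`). -/
def bar (S : Set BLPt) : Set BLPt :=
  S ∪ {y | ∃ y' ∈ S, (y.1 - y'.1) ^ 2 = 1 ∧ (y.2 - y'.2) ^ 2 = 1}

/-- `∂S̄ = S̄ \ S`. -/
def bdry (S : Set BLPt) : Set BLPt := bar S \ S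

/-- `ℰ(S̄)`: the edges with at least one endpoint in `S`. -/
def edgeSet (S : Set BLPt) : Set BLEdge := {e | fstPt e ∈ S ∨ sndPt e ∈ S}

/-- A flow field on `ℰ(S̄)`: nonnegative on `ℰ(S̄)` and conservative at every `y ∈ S`:
`η(e_y^SW) + η(e_y^SE) = η(e_y^NW) + η(e_y^NE)`. -/
def IsFlowField (S : Set BLPt) (η : BLEdge → ℝ) : Prop :=
  (∀ e ∈ edgeSet S, 0 ≤ η e) ∧
  ∀ y ∈ S, η (eSW y) + η (eSE y) = η (eNW y) + η (eNE y)

/-- A broken trace `(y₀, e₁, y₁, …, e_n, y_n)`, `n ≥ 1`, encoded by its list of points: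
all points lie in `Z̃²`, and consecutive points satisfy `x_{i} = x_{i−1} + 1`,
`t_i = t_{i−1} ± 1` (the edges are then determined). -/
def IsBrokenTrace (l : List BLPt) : Prop :=
  2 ≤ l.length ∧ (∀ y ∈ l, (y.1 + y.2) % 2 = 0) ∧
  ∀ i : ℕ, ∀ h : i + 1 < l.length,
    (l[i + 1]'h).2 = (l[i]'(Nat.lt_of_succ_lt h)).2 + 1 ∧
    ((l[i + 1]'h).1 = (l[i]'(Nat.lt_of_succ_lt h)).1 + 1 ∨
      (l[i + 1]'h).1 = (l[i]'(Nat.lt_of_succ_lt h)).1 - 1)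

/-- The list of edges `e₁, …, e_n` of a broken trace. -/
def traceEdges (l : List BLPt) : List BLEdge :=
  List.zipWith (fun y y' => ((y, y'.1 == y.1 + 1) : BLEdge)) l l.tail

/-- `ℓ ⊆ S̄`: a broken trace all of whose edges lie in `ℰ(S̄)`. -/
def InBar (S : Set BLPt) (l : List BLPt) : Prop :=
  IsBrokenTrace l ∧ ∀ e ∈ traceEdges l, e ∈ edgeSet S

/-- `ℓ` crosses `S`: `ℓ ⊆ S̄` and its two extremal points lie in `∂S̄`.
`C(S)` is the set of broken traces crossing `S`. -/
def Crosses (S : Set BLPt) (l : List BLPt) : Prop :=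
  InBar S l ∧ (∃ y ∈ bdry S, l.head? = some y) ∧ (∃ y ∈ bdry S, l.getLast? = some y)

/-- `ℓ ⪰ ℓ'` (`ℓ` is to the right of `ℓ'`): `t(x) ≥ t'(x)` for every
`x ∈ D(ℓ) ∩ D(ℓ')`, and `t(x) ≥ t'(x')` for some `x ∈ D(ℓ)`, `x' ∈ D(ℓ')`. -/
def RightOf (l l' : List BLPt) : Prop :=
  (∀ y ∈ l, ∀ y' ∈ l', y.2 = y'.2 → y'.1 ≤ y.1) ∧
  ∃ y ∈ l, ∃ y' ∈ l', y'.1 ≤ y.1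

/-- The birth `ξ_y = min(η(e_y^NE), η(e_y^SE))` of a flow field at `y`. -/
noncomputable def xi (η : BLEdge → ℝ) (y : BLPt) : ℝ := min (η (eNE y)) (η (eSE y))

/-- Association of atoms `(e₁,p₁) ∼ (e₂,p₂)` at a vertex `y ∈ S` (Cases 1–4). -/
def Assoc (S : Set BLPt) (η : BLEdge → ℝ) (e₁ : BLEdge) (p₁ : ℝ) (e₂ : BLEdge) (p₂ : ℝ) :
    Prop :=
  ∃ y ∈ S,
    (e₁ = eSW y ∧ e₂ = eNW y ∧ 0 < p₁ ∧ p₁ ≤ min (η e₁) (η e₂) ∧ p₂ = p₁) ∨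
    (e₁ = eSE y ∧ e₂ = eNW y ∧ η (eSW y) < p₂ ∧ p₂ ≤ η e₂ ∧ p₁ = p₂ - η (eSW y)) ∨
    (e₁ = eSW y ∧ e₂ = eNE y ∧ η (eNW y) < p₁ ∧ p₁ ≤ η e₁ ∧ p₂ = p₁ - η (eNW y)) ∨
    (e₁ = eSE y ∧ e₂ = eNE y ∧ η e₁ - xi η y < p₁ ∧ p₁ ≤ η e₁ ∧
      η e₂ - xi η y < p₂ ∧ p₂ ≤ η e₂ ∧ η e₁ - p₁ = η e₂ - p₂)

/-- A chain of associated atoms along a list of edges: `ps i` is an atom of the `i`-th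
edge and consecutive atoms are associated. -/
def IsChain (S : Set BLPt) (η : BLEdge → ℝ) (es : List BLEdge) (ps : ℕ → ℝ) : Prop :=
  (∀ i : ℕ, ∀ h : i < es.length, 0 < ps i ∧ ps i ≤ η (es[i]'h)) ∧
  ∀ i : ℕ, ∀ h : i + 1 < es.length,
    Assoc S η (es[i]'(Nat.lt_of_succ_lt h)) (ps i) (es[i + 1]'h) (ps (i + 1))

/-- The set of atoms of the `i`-th edge of `ℓ` that participate in some chain of
associated atoms along `ℓ`. -/
def chainPosSet (S : Set BLPt) (η : BLEdge → ℝ) (l : List BLPt) (i : ℕ) : Set ℝ :=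
  {p | ∃ ps : ℕ → ℝ, IsChain S η (traceEdges l) ps ∧ ps i = p}

/-- The weight `w_η(ℓ)` of a broken trace: the common length of the maximal intervals
of atoms participating in chains along `ℓ` (and `0` if there is no such chain). -/
noncomputable def weight (S : Set BLPt) (η : BLEdge → ℝ) (l : List BLPt) : ℝ := by
  classical
  exact if (chainPosSet S η l 0).Nonempty then
      sSup (chainPosSet S η l 0) - sInf (chainPosSet S η l 0)
    else 0

end BL

namespace BL

/-- An edge of `ℰ(S̄)` joining `y ∈ S` to `y' ∈ ∂S̄` with `t_{y'} = t_y − 1`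
(a left-boundary edge, carrying the incoming boundary data `ζ°`). -/
def IsLeftBdryEdge (S : Set BLPt) (e : BLEdge) : Prop :=
  (fstPt e ∈ S ∧ sndPt e ∉ S ∧ (sndPt e).1 < (fstPt e).1) ∨
  (sndPt e ∈ S ∧ fstPt e ∉ S ∧ (fstPt e).1 < (sndPt e).1)

/-- Zero boundary conditions: `η` vanishes on all left-boundary edges. -/
def ZeroLeftBoundary (S : Set BLPt) (η : BLEdge → ℝ) : Prop :=
  ∀ e : BLEdge, IsLeftBdryEdge S e → η e = 0

/-- The recursion defining the flow field `η(ζ°, ξ)` from the birth field `ξ`: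
at every `y ∈ S`, `η(e_y^NE) = ξ_y + (η(e_y^SW) − η(e_y^NW))⁺` and
`η(e_y^SE) = ξ_y + (η(e_y^NW) − η(e_y^SW))⁺`. -/
def BirthRecursion (S : Set BLPt) (η : BLEdge → ℝ) (ξ : BLPt → ℝ) : Prop :=
  ∀ y ∈ S, η (eNE y) = ξ y + max (η (eSW y) - η (eNW y)) 0 ∧
    η (eSE y) = ξ y + max (η (eNW y) - η (eSW y)) 0

/-- A directed path `π ∈ Π_S`: it stays in `S`, starts at the unique leftmost point
`∂₀S` (minimal `t`), ends at the unique rightmost point `∂₁S` (maximal `t`), and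
satisfies `t_{i+1} = t_i + 1`, `x_{i+1} = x_i ± 1`. -/
def IsLppPath (S : Set BLPt) (p : List BLPt) : Prop :=
  p ≠ [] ∧ (∀ y ∈ p, y ∈ S) ∧
  (∀ y, p.head? = some y → ∀ y' ∈ S, y.1 ≤ y'.1) ∧
  (∀ y, p.getLast? = some y → ∀ y' ∈ S, y'.1 ≤ y.1) ∧
  ∀ i : ℕ, ∀ h : i + 1 < p.length,
    (p[i + 1]'h).1 = (p[i]'(Nat.lt_of_succ_lt h)).1 + 1 ∧
    ((p[i + 1]'h).2 = (p[i]'(Nat.lt_of_succ_lt h)).2 + 1 ∨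
      (p[i + 1]'h).2 = (p[i]'(Nat.lt_of_succ_lt h)).2 - 1)

/-- The last passage percolation value `G_S(ξ) = max_{π ∈ Π_S} Σ_{y ∈ π} ξ_y`. -/
noncomputable def lppValue (S : Set BLPt) (ξ : BLPt → ℝ) : ℝ :=
  sSup {v : ℝ | ∃ p : List BLPt, IsLppPath S p ∧ (p.map ξ).sum = v}

end BL

namespace BLAux

open BL

/-! Helper computations for edges. -/

lemma sndPt_eSW (y : BLPt) : sndPt (eSW y) = y := by
  simp [sndPt, eSW, Prod.ext_iff]

lemma fstPt_eSW (y : BLPt) : fstPt (eSW y) = (y.1 - 1, y.2 - 1) := rfl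

lemma sndPt_eSE (y : BLPt) : sndPt (eSE y) = y := by
  simp [sndPt, eSE, Prod.ext_iff]

lemma fstPt_eSE (y : BLPt) : fstPt (eSE y) = (y.1 + 1, y.2 - 1) := rfl

lemma sndPt_eNW (y : BLPt) : sndPt (eNW y) = (y.1 - 1, y.2 + 1) := by
  simp [sndPt, eNW, Prod.ext_iff]
  omega

lemma fstPt_eNW (y : BLPt) : fstPt (eNW y) = y := rfl

/-! An environment recording a coordinate system on a rectangular domain. -/

structure Env : Type where
  S : Set BLPt
  a : ℤ
  b : ℤ
  c : ℤ
  d : ℤ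
  t0 : ℤ
  x0 : ℤ
  m : ℕ
  n : ℕ
  hSdef : S = {y : BLPt | (y.1 + y.2) % 2 = 0 ∧ a ≤ y.2 + y.1 ∧ y.2 + y.1 ≤ b ∧
    c ≤ y.2 - y.1 ∧ y.2 - y.1 ≤ d}
  heven : (x0 + t0) % 2 = 0
  hal : a ≤ x0 + t0
  hau : x0 + t0 ≤ a + 1
  hcl : c ≤ x0 - t0
  hcu : x0 - t0 ≤ c + 1
  hm : 0 < m
  hn : 0 < n
  hb1 : x0 + t0 + 2 * (m : ℤ) ≤ b + 2
  hb2 : b < x0 + t0 + 2 * (m : ℤ)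
  hd1 : x0 - t0 + 2 * (n : ℤ) ≤ d + 2
  hd2 : d < x0 - t0 + 2 * (n : ℤ)

def Env.pt (E : Env) (i j : ℕ) : BLPt := (E.t0 + i - j, E.x0 + i + j)

lemma Env.mem_iff (E : Env) (y : BLPt) :
    y ∈ E.S ↔ ((y.1 + y.2) % 2 = 0 ∧ E.a ≤ y.2 + y.1 ∧ y.2 + y.1 ≤ E.b ∧
      E.c ≤ y.2 - y.1 ∧ y.2 - y.1 ≤ E.d) := by
  rw [E.hSdef]; rfl

lemma Env.pt_mem (E : Env) {i j : ℕ} (hi : i < E.m) (hj : j < E.n) : E.pt i j ∈ E.S := by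
  have h1 := E.heven; have h2 := E.hal; have h3 := E.hb1; have h4 := E.hcl
  have h5 := E.hd1; have h6 := E.hau; have h7 := E.hcu
  rw [E.mem_iff]
  simp only [Env.pt]
  refine ⟨?_, ?_, ?_, ?_, ?_⟩ <;> omega

lemma Env.mem_pt_inv (E : Env) {y : BLPt} (hy : y ∈ E.S) :
    ∃ i, i < E.m ∧ ∃ j, j < E.n ∧ y = E.pt i j := by
  rw [E.mem_iff] at hy
  obtain ⟨h0, h1, h2, h3, h4⟩ := hy
  have e1 := E.heven; have e2 := E.hal; have e3 := E.hb1; have e4 := E.hcl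
  have e5 := E.hd1; have e6 := E.hau; have e7 := E.hcu
  have e8 := E.hb2; have e9 := E.hd2
  refine ⟨((y.2 + y.1 - (E.x0 + E.t0)) / 2).toNat, by omega,
    ((y.2 - y.1 - (E.x0 - E.t0)) / 2).toNat, by omega, ?_⟩
  rw [Prod.ext_iff]
  constructor <;> (simp only [Env.pt]; omega)

lemma Env.eSW_succ (E : Env) (i j : ℕ) : eSW (E.pt (i + 1) j) = eNE (E.pt i j) := by
  simp only [eSW, eNE, Env.pt, Prod.ext_iff]
  refine ⟨⟨?_, ?_⟩, trivial⟩ <;> push_cast <;> ring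

lemma Env.eNW_up (E : Env) (i j : ℕ) : eNW (E.pt i j) = eSE (E.pt i (j + 1)) := by
  simp only [eNW, eSE, Env.pt, Prod.ext_iff]
  refine ⟨⟨?_, ?_⟩, trivial⟩ <;> push_cast <;> ring

/-! Boundary data and the height function. -/

def hz (E : Env) (η : BLEdge → ℝ) (j : ℕ) : ℝ := η (eSW (E.pt 0 j))

def vz (E : Env) (η : BLEdge → ℝ) (i : ℕ) : ℝ := η (eNW (E.pt i (E.n - 1)))

def LS (E : Env) (η : BLEdge → ℝ) (j : ℕ) : ℝ := ∑ j' ∈ Finset.Ico j E.n, hz E η j'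

def TS (E : Env) (η : BLEdge → ℝ) (i : ℕ) : ℝ := ∑ i' ∈ Finset.range (i + 1), vz E η i'

def G (E : Env) (η : BLEdge → ℝ) (i j : ℕ) : ℝ :=
  LS E η j + ∑ i' ∈ Finset.range (i + 1), η (eSE (E.pt i' j))

def Gl (E : Env) (η : BLEdge → ℝ) (i j : ℕ) : ℝ :=
  if i = 0 then LS E η j else G E η (i - 1) j

def Gu (E : Env) (η : BLEdge → ℝ) (i j : ℕ) : ℝ :=
  if j + 1 = E.n then TS E η i else G E η i (j + 1)

def D (E : Env) (η : BLEdge → ℝ) (i j : ℕ) : ℝ :=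
  if i = 0 then LS E η (j + 1)
  else (if j + 1 = E.n then TS E η (i - 1) else G E η (i - 1) (j + 1))

lemma LS_succ (E : Env) (η : BLEdge → ℝ) {j : ℕ} (hj : j < E.n) :
    LS E η j = hz E η j + LS E η (j + 1) :=
  Finset.sum_eq_sum_Ico_succ_bot hj _

lemma LS_top (E : Env) (η : BLEdge → ℝ) : LS E η E.n = 0 := by
  simp [LS]

lemma Gsplit (E : Env) (η : BLEdge → ℝ) (i j : ℕ) :
    G E η i j = Gl E η i j + η (eSE (E.pt i j)) := by
  cases i with
  | zero => simp [G, Gl, Finset.sum_range_one]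
  | succ k =>
      simp only [G, Gl, Finset.sum_range_succ, Nat.add_sub_cancel,
        if_neg (Nat.succ_ne_zero k)]
      ring

lemma Gdiff (E : Env) (η : BLEdge → ℝ) (hη : IsFlowField E.S η) :
    ∀ i, i < E.m → ∀ j, j < E.n → G E η i j = Gu E η i j + η (eNE (E.pt i j)) := by
  intro i
  induction i with
  | zero =>
      intro hi j hj
      have hy : E.pt 0 j ∈ E.S := E.pt_mem E.hm hj
      have hcons := hη.2 _ hy
      have hG : G E η 0 j = LS E η j + η (eSE (E.pt 0 j)) := by
        simp [G, Finset.sum_range_one]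
      have hLS := LS_succ E η hj
      have hSW : η (eSW (E.pt 0 j)) = hz E η j := rfl
      by_cases hjn : j + 1 = E.n
      · have hj' : E.n - 1 = j := by omega
        have hNW : η (eNW (E.pt 0 j)) = vz E η 0 := by rw [vz, hj']
        have hGu : Gu E η 0 j = TS E η 0 := by simp [Gu, hjn]
        have hTS : TS E η 0 = vz E η 0 := by simp [TS]
        have hL0 : LS E η (j + 1) = 0 := by rw [hjn]; exact LS_top E η
        rw [hG, hGu, hTS]
        linarith
      · have hNW : η (eNW (E.pt 0 j)) = η (eSE (E.pt 0 (j + 1))) := by rw [E.eNW_up]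
        have hGu : Gu E η 0 j = G E η 0 (j + 1) := by simp [Gu, hjn]
        have hG2 : G E η 0 (j + 1) = LS E η (j + 1) + η (eSE (E.pt 0 (j + 1))) := by
          simp [G, Finset.sum_range_one]
        rw [hG, hGu, hG2]
        linarith
  | succ k ih =>
      intro hi j hj
      have hi' : k < E.m := Nat.lt_of_succ_lt hi
      have hy : E.pt (k + 1) j ∈ E.S := E.pt_mem hi hj
      have hcons := hη.2 _ hy
      have hG : G E η (k + 1) j = G E η k j + η (eSE (E.pt (k + 1) j)) := by
        simp only [G, Finset.sum_range_succ]; ring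
      have hSW : η (eSW (E.pt (k + 1) j)) = η (eNE (E.pt k j)) := by rw [E.eSW_succ]
      have hIH := ih hi' j hj
      by_cases hjn : j + 1 = E.n
      · have hj' : E.n - 1 = j := by omega
        have hNW : η (eNW (E.pt (k + 1) j)) = vz E η (k + 1) := by rw [vz, hj']
        have hGu1 : Gu E η (k + 1) j = TS E η (k + 1) := by simp [Gu, hjn]
        have hGu2 : Gu E η k j = TS E η k := by simp [Gu, hjn]
        have hTS : TS E η (k + 1) = TS E η k + vz E η (k + 1) := by
          simp [TS, Finset.sum_range_succ]
        rw [hG, hGu1, hTS]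
        linarith
      · have hNW : η (eNW (E.pt (k + 1) j)) = η (eSE (E.pt (k + 1) (j + 1))) := by
          rw [E.eNW_up]
        have hGu1 : Gu E η (k + 1) j = G E η (k + 1) (j + 1) := by simp [Gu, hjn]
        have hGu2 : Gu E η k j = G E η k (j + 1) := by simp [Gu, hjn]
        have hG2 : G E η (k + 1) (j + 1) = G E η k (j + 1) + η (eSE (E.pt (k + 1) (j + 1))) := by
          simp only [G, Finset.sum_range_succ]; ring
        rw [hG, hGu1, hG2]
        linarith

lemma Grec (E : Env) (η : BLEdge → ℝ) (ξ : BLPt → ℝ) (hη : IsFlowField E.S η)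
    (hrec : BirthRecursion E.S η ξ) {i j : ℕ} (hi : i < E.m) (hj : j < E.n) :
    G E η i j = ξ (E.pt i j) + max (Gl E η i j) (Gu E η i j) := by
  have hy : E.pt i j ∈ E.S := E.pt_mem hi hj
  have hr := (hrec _ hy).2
  have hG := Gsplit E η i j
  have hSW : η (eSW (E.pt i j)) = Gl E η i j - D E η i j := by
    cases i with
    | zero =>
        have hls := LS_succ E η hj
        have hzr : hz E η j = η (eSW (E.pt 0 j)) := rfl
        have hGl : Gl E η 0 j = LS E η j := by simp [Gl]
        have hD : D E η 0 j = LS E η (j + 1) := by simp [D]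
        rw [hGl, hD]
        linarith
    | succ k =>
        have hk : k < E.m := Nat.lt_of_succ_lt hi
        have hd := Gdiff E η hη k hk j hj
        have hsw : η (eSW (E.pt (k + 1) j)) = η (eNE (E.pt k j)) := by rw [E.eSW_succ]
        have hGl : Gl E η (k + 1) j = G E η k j := by
          simp only [Gl, Nat.add_sub_cancel, if_neg (Nat.succ_ne_zero k)]
        have hD : D E η (k + 1) j = Gu E η k j := by
          simp only [D, Gu, Nat.add_sub_cancel, if_neg (Nat.succ_ne_zero k)]
        rw [hsw, hGl, hD]
        linarith
  have hNW : η (eNW (E.pt i j)) = Gu E η i j - D E η i j := by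
    by_cases hjn : j + 1 = E.n
    · have hj' : E.n - 1 = j := by omega
      have h1 : η (eNW (E.pt i j)) = vz E η i := by rw [vz, hj']
      cases i with
      | zero =>
          have hL0 : LS E η (j + 1) = 0 := by rw [hjn]; exact LS_top E η
          have hTS : TS E η 0 = vz E η 0 := by simp [TS]
          have hGu : Gu E η 0 j = TS E η 0 := by simp [Gu, hjn]
          have hD : D E η 0 j = LS E η (j + 1) := by simp [D]
          rw [h1, hGu, hD, hTS, hL0]
          ring
      | succ k =>
          have hTS : TS E η (k + 1) = TS E η k + vz E η (k + 1) := by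
            simp [TS, Finset.sum_range_succ]
          simp only [Gu, D, if_pos hjn, Nat.add_sub_cancel,
            if_neg (Nat.succ_ne_zero k)]
          rw [h1, hTS]
          ring
    · have h1 : η (eNW (E.pt i j)) = η (eSE (E.pt i (j + 1))) := by rw [E.eNW_up]
      have h2 := Gsplit E η i (j + 1)
      have hGu : Gu E η i j = G E η i (j + 1) := by simp [Gu, hjn]
      have hD : D E η i j = Gl E η i (j + 1) := by
        cases i with
        | zero => simp [D, Gl]
        | succ k =>
            simp only [D, Gl, if_neg hjn, Nat.add_sub_cancel,
              if_neg (Nat.succ_ne_zero k)]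
      rw [h1, hGu, hD]
      linarith
  rw [hG, hr, hSW, hNW]
  have h3 : Gu E η i j - D E η i j - (Gl E η i j - D E η i j) = Gu E η i j - Gl E η i j := by
    ring
  rw [h3]
  rcases le_total (Gl E η i j) (Gu E η i j) with h | h
  · rw [max_eq_right h, max_eq_left (sub_nonneg.mpr h)]; ring
  · rw [max_eq_left h, max_eq_right (sub_nonpos.mpr h)]; ring

lemma Gmono (E : Env) (η η' : BLEdge → ℝ) (ξ ξ' : BLPt → ℝ)
    (hη : IsFlowField E.S η) (hη' : IsFlowField E.S η')
    (hrec : BirthRecursion E.S η ξ) (hrec' : BirthRecursion E.S η' ξ')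
    (hhz : ∀ j, j < E.n → hz E η j ≤ hz E η' j)
    (hvz : ∀ i, i < E.m → vz E η i ≤ vz E η' i)
    (hxi : ∀ i, i < E.m → ∀ j, j < E.n → ξ (E.pt i j) ≤ ξ' (E.pt i j)) :
    ∀ N i j, i < E.m → j < E.n → i + (E.n - j) ≤ N → G E η i j ≤ G E η' i j := by
  have hLS : ∀ j, LS E η j ≤ LS E η' j := by
    intro j
    refine Finset.sum_le_sum fun j' hj' => hhz j' ?_
    exact (Finset.mem_Ico.mp hj').2
  have hTS : ∀ i, i < E.m → TS E η i ≤ TS E η' i := by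
    intro i hi
    refine Finset.sum_le_sum fun i' hi' => hvz i' ?_
    have := Finset.mem_range.mp hi'
    omega
  intro N
  induction N with
  | zero => intro i j hi hj hN; omega
  | succ N ih =>
      intro i j hi hj hN
      rw [Grec E η ξ hη hrec hi hj, Grec E η' ξ' hη' hrec' hi hj]
      apply add_le_add (hxi i hi j hj)
      apply max_le_max
      · by_cases hi0 : i = 0
        · simp only [Gl, if_pos hi0]; exact hLS j
        · simp only [Gl, if_neg hi0]
          exact ih (i - 1) j (by omega) hj (by omega)
      · by_cases hjn : j + 1 = E.n
        · simp only [Gu, if_pos hjn]; exact hTS i hi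
        · simp only [Gu, if_neg hjn]
          exact ih i (j + 1) hi (by omega) (by omega)

/-! Identification of the boundary edges and of the total sum. -/

lemma Env.isLeftBdry_hz (E : Env) {j : ℕ} (hj : j < E.n) :
    IsLeftBdryEdge E.S (eSW (E.pt 0 j)) := by
  right
  refine ⟨?_, ?_, ?_⟩
  · rw [sndPt_eSW]; exact E.pt_mem E.hm hj
  · rw [fstPt_eSW]
    intro h
    rw [E.mem_iff] at h
    simp only [Env.pt] at h
    have := E.hau
    omega
  · rw [fstPt_eSW, sndPt_eSW]
    simp only [Env.pt]
    omega

lemma Env.isLeftBdry_vz (E : Env) {i : ℕ} (hi : i < E.m) :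
    IsLeftBdryEdge E.S (eNW (E.pt i (E.n - 1))) := by
  left
  have hn := E.hn
  refine ⟨?_, ?_, ?_⟩
  · rw [fstPt_eNW]; exact E.pt_mem hi (by omega)
  · rw [sndPt_eNW]
    intro h
    rw [E.mem_iff] at h
    simp only [Env.pt] at h
    have := E.hd2
    omega
  · rw [fstPt_eNW, sndPt_eNW]
    simp only [Env.pt]
    omega

def Env.Fe (E : Env) : Finset BLEdge :=
  ((Finset.range E.n).image fun j => eSW (E.pt 0 j)) ∪
    ((Finset.range E.m).image fun i => eSE (E.pt i 0))

lemma Env.edge_char (E : Env) :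
    {e : BLEdge | sndPt e ∈ E.S ∧ fstPt e ∈ bdry E.S} = ↑E.Fe := by
  ext e
  simp only [Set.mem_setOf_eq, Finset.coe_union, Set.mem_union, Finset.coe_image,
    Set.mem_image, Finset.mem_coe, Finset.mem_range, Env.Fe]
  constructor
  · rintro ⟨h1, h2⟩
    obtain ⟨i, hi, j, hj, hEq⟩ := E.mem_pt_inv h1
    have h2' : fstPt e ∉ E.S := h2.2
    obtain ⟨z, bb⟩ := e
    cases bb
    · -- sndPt = (z.1 - 1, z.2 + 1)
      right
      have hz1 : z.1 - 1 = (E.pt i j).1 ∧ z.2 + 1 = (E.pt i j).2 := by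
        have := Prod.ext_iff.mp hEq
        simpa [sndPt, sub_eq_add_neg] using this
      have hj0 : j = 0 := by
        by_contra hj0
        apply h2'
        have : (z : BLPt) = E.pt i (j - 1) := by
          rw [Prod.ext_iff]
          simp only [Env.pt] at hz1 ⊢
          omega
        rw [show fstPt (z, false) = z from rfl, this]
        exact E.pt_mem hi (by omega)
      refine ⟨i, hi, ?_⟩
      subst hj0
      simp only [eSE, Prod.ext_iff]
      simp only [Env.pt] at hz1 ⊢
      refine ⟨⟨?_, ?_⟩, trivial⟩ <;> omega
    · -- bb = true : sndPt = (z.1 + 1, z.2 + 1)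
      left
      have hz1 : z.1 + 1 = (E.pt i j).1 ∧ z.2 + 1 = (E.pt i j).2 := by
        have := Prod.ext_iff.mp hEq
        simpa [sndPt] using this
      have hi0 : i = 0 := by
        by_contra hi0
        apply h2'
        have : (z : BLPt) = E.pt (i - 1) j := by
          rw [Prod.ext_iff]
          simp only [Env.pt] at hz1 ⊢
          omega
        rw [show fstPt (z, true) = z from rfl, this]
        exact E.pt_mem (by omega) hj
      refine ⟨j, hj, ?_⟩
      subst hi0
      simp only [eSW, Prod.ext_iff]
      simp only [Env.pt] at hz1 ⊢
      refine ⟨⟨?_, ?_⟩, trivial⟩ <;> omega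
  · rintro (⟨j, hj, rfl⟩ | ⟨i, hi, rfl⟩)
    · refine ⟨?_, ?_, ?_⟩
      · rw [sndPt_eSW]; exact E.pt_mem E.hm hj
      · right
        refine ⟨E.pt 0 j, E.pt_mem E.hm hj, ?_, ?_⟩ <;>
          (rw [fstPt_eSW]; ring_nf)
      · rw [fstPt_eSW]
        intro h
        rw [E.mem_iff] at h
        simp only [Env.pt] at h
        have := E.hau
        omega
    · refine ⟨?_, ?_, ?_⟩
      · rw [sndPt_eSE]; exact E.pt_mem hi E.hn
      · right
        refine ⟨E.pt i 0, E.pt_mem hi E.hn, ?_, ?_⟩ <;>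
          (rw [fstPt_eSE]; ring_nf)
      · rw [fstPt_eSE]
        intro h
        rw [E.mem_iff] at h
        simp only [Env.pt] at h
        have := E.hcu
        omega

lemma Env.sum_eq (E : Env) (η : BLEdge → ℝ) :
    ∑ e ∈ E.Fe, η e = G E η (E.m - 1) 0 := by
  have hdisj : Disjoint ((Finset.range E.n).image fun j => eSW (E.pt 0 j))
      ((Finset.range E.m).image fun i => eSE (E.pt i 0)) := by
    rw [Finset.disjoint_left]
    intro e he1 he2
    obtain ⟨j, _, rfl⟩ := Finset.mem_image.mp he1
    obtain ⟨i, _, heq⟩ := Finset.mem_image.mp he2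
    simp [eSE, eSW, Prod.ext_iff] at heq
  have hinj1 : ∀ x ∈ Finset.range E.n, ∀ y ∈ Finset.range E.n,
      eSW (E.pt 0 x) = eSW (E.pt 0 y) → x = y := by
    intro x _ y _ h
    simp only [eSW, Env.pt, Prod.ext_iff] at h
    omega
  have hinj2 : ∀ x ∈ Finset.range E.m, ∀ y ∈ Finset.range E.m,
      eSE (E.pt x 0) = eSE (E.pt y 0) → x = y := by
    intro x _ y _ h
    simp only [eSE, Env.pt, Prod.ext_iff] at h
    omega
  have hm1 : E.m - 1 + 1 = E.m := Nat.succ_pred_eq_of_pos E.hm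
  rw [Env.Fe, Finset.sum_union hdisj, Finset.sum_image hinj1, Finset.sum_image hinj2,
    G, hm1]
  congr 1
  rw [LS, Finset.range_eq_Ico]
  rfl

end BLAux

open BL in
/-- **Monotonicity of the total broken-line weight:** if `ζ° ≤ ζ̃°` entrywise on the
left-boundary edges and `ξ ≤ ξ̃` pointwise on `S`, then `H_S(ζ°, ξ) ≤ H_S(ζ̃°, ξ̃)`,
where `η` (resp. `η̃`) is the flow field determined by the boundary data and the birth
recursion, and `H_S` is the total flow through edges `⟨y,y'⟩` with `y ∈ S`, `y' ∈ ∂S̄`,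
`x_{y'} = x_y − 1`. -/
theorem total_weight_monotone (S : Set BLPt) (hS : IsRectDomain S)
    (ξ ξ' : BLPt → ℝ) (η η' : BLEdge → ℝ)
    (hη : IsFlowField S η) (hη' : IsFlowField S η')
    (hrec : BirthRecursion S η ξ) (hrec' : BirthRecursion S η' ξ')
    (hξ0 : ∀ y ∈ S, 0 ≤ ξ y) (hξle : ∀ y ∈ S, ξ y ≤ ξ' y)
    (hζle : ∀ e : BLEdge, IsLeftBdryEdge S e → η e ≤ η' e) :
    (∑ᶠ e ∈ {e : BLEdge | sndPt e ∈ S ∧ fstPt e ∈ bdry S}, η e) ≤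
      (∑ᶠ e ∈ {e : BLEdge | sndPt e ∈ S ∧ fstPt e ∈ bdry S}, η' e) := by

  classical
  obtain ⟨⟨y0, hy0⟩, a, b, c, d, hSdef⟩ := hS
  have hy0' : (y0.1 + y0.2) % 2 = 0 ∧ a ≤ y0.2 + y0.1 ∧ y0.2 + y0.1 ≤ b ∧
      c ≤ y0.2 - y0.1 ∧ y0.2 - y0.1 ≤ d := by
    rw [hSdef] at hy0; exact hy0
  obtain ⟨h0, h1, h2, h3, h4⟩ := hy0'
  let E : BLAux.Env :=
    { S := S, a := a, b := b, c := c, d := d,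
      t0 := ((a + a % 2) - (c + c % 2)) / 2,
      x0 := ((a + a % 2) + (c + c % 2)) / 2,
      m := ((b - (a + a % 2)) / 2).toNat + 1,
      n := ((d - (c + c % 2)) / 2).toNat + 1,
      hSdef := hSdef,
      heven := by omega,
      hal := by omega,
      hau := by omega,
      hcl := by omega,
      hcu := by omega,
      hm := Nat.succ_pos _,
      hn := Nat.succ_pos _,
      hb1 := by push_cast; omega,
      hb2 := by push_cast; omega,
      hd1 := by push_cast; omega,
      hd2 := by push_cast; omega }
  have hhz : ∀ j, j < E.n → BLAux.hz E η j ≤ BLAux.hz E η' j :=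
    fun j hj => hζle _ (E.isLeftBdry_hz hj)
  have hvz : ∀ i, i < E.m → BLAux.vz E η i ≤ BLAux.vz E η' i :=
    fun i hi => hζle _ (E.isLeftBdry_vz hi)
  have hxi : ∀ i, i < E.m → ∀ j, j < E.n → ξ (E.pt i j) ≤ ξ' (E.pt i j) :=
    fun i hi j hj => hξle _ (E.pt_mem hi hj)
  have hmono := BLAux.Gmono E η η' ξ ξ' hη hη' hrec hrec' hhz hvz hxi
    ((E.m - 1) + E.n) (E.m - 1) 0 (by have := E.hm; omega) E.hn (by omega)
  have hset : {e : BLEdge | sndPt e ∈ S ∧ fstPt e ∈ bdry S} = ↑E.Fe := E.edge_char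
  rw [hset, finsum_mem_coe_finset, finsum_mem_coe_finset, E.sum_eq η, E.sum_eq η']
  exact hmono
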